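/- arXiv:2510.00784 — 2 statements merged into one kernel-verified Lean document; each statement's English description precedes it below -/
import Mathlib

section
/- Let v : ℝ³ → ℝ be C², write coordinates (x,y,t), and suppose at a point ξ we have ∇₃(∂ₓv)(ξ) = a₁·k + a₂·n and ∇₃(∂_y v)(ξ) = b₁·k + b₂·n for an orthonormal positively oriented frame (t, k, n) of ℝ³ (i.e., the gradients of vₓ and v_y have no component along t). Then the 2×2 spatial Hessian determinant D_xy := v_xx·v_yy − v_xy² at ξ equals (a₁b₂ − a₂b₁)·t₃, where t₃ is the third component of t. -/
noncomputable def px (f : ℝ × ℝ × ℝ → ℝ) (p : ℝ × ℝ × ℝ) : ℝ := fderiv ℝ f p (1, 0, 0)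
noncomputable def py (f : ℝ × ℝ × ℝ → ℝ) (p : ℝ × ℝ × ℝ) : ℝ := fderiv ℝ f p (0, 1, 0)
noncomputable def pt (f : ℝ × ℝ × ℝ → ℝ) (p : ℝ × ℝ × ℝ) : ℝ := fderiv ℝ f p (0, 0, 1)

lemma symm_aux (v : ℝ × ℝ × ℝ → ℝ) (hv : ContDiff ℝ 2 v) (ξ : ℝ × ℝ × ℝ) :
    py (px v) ξ = px (py v) ξ := by
  have hdf : DifferentiableAt ℝ (fderiv ℝ v) ξ :=
    (hv.fderiv_right (m := 1) (by norm_num)).differentiable (by norm_num) ξ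
  have hsymm : IsSymmSndFDerivAt ℝ v ξ :=
    hv.contDiffAt.isSymmSndFDerivAt (by norm_num)
  have key : ∀ w u : ℝ × ℝ × ℝ,
      fderiv ℝ (fun p => fderiv ℝ v p w) ξ u = fderiv ℝ (fderiv ℝ v) ξ u w := by
    intro w u
    have := fderiv_clm_apply (c := fderiv ℝ v) (u := fun _ : ℝ × ℝ × ℝ => w) hdf
      (differentiableAt_const w)
    rw [show (fun p => fderiv ℝ v p w) = fun p => (fderiv ℝ v p) ((fun _ => w) p) from rfl,
      this]
    simp
  show fderiv ℝ (fun p => fderiv ℝ v p (1,0,0)) ξ (0,1,0)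
      = fderiv ℝ (fun p => fderiv ℝ v p (0,1,0)) ξ (1,0,0)
  rw [key, key, hsymm]

/-- If at ξ the full gradients of vₓ and v_y lie in the span of k and n
(an orthonormal positively oriented frame (t,k,n)), namely ∇₃vₓ = a₁k + a₂n and
∇₃v_y = b₁k + b₂n, then D_xy := v_xx·v_yy − v_xy² = (a₁b₂ − a₂b₁)·t₃. -/
theorem spatial_hessian_determinant (v : ℝ × ℝ × ℝ → ℝ) (hv : ContDiff ℝ 2 v)
    (ξ : ℝ × ℝ × ℝ) (t k n : Fin 3 → ℝ) (a₁ a₂ b₁ b₂ : ℝ)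
    (ht : t 0 ^ 2 + t 1 ^ 2 + t 2 ^ 2 = 1)
    (hk : k 0 ^ 2 + k 1 ^ 2 + k 2 ^ 2 = 1)
    (htk : t 0 * k 0 + t 1 * k 1 + t 2 * k 2 = 0)
    (hn0 : n 0 = t 1 * k 2 - t 2 * k 1)
    (hn1 : n 1 = t 2 * k 0 - t 0 * k 2)
    (hn2 : n 2 = t 0 * k 1 - t 1 * k 0)
    (hx0 : px (px v) ξ = a₁ * k 0 + a₂ * n 0)
    (hx1 : py (px v) ξ = a₁ * k 1 + a₂ * n 1)
    (hx2 : pt (px v) ξ = a₁ * k 2 + a₂ * n 2)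
    (hy0 : px (py v) ξ = b₁ * k 0 + b₂ * n 0)
    (hy1 : py (py v) ξ = b₁ * k 1 + b₂ * n 1)
    (hy2 : pt (py v) ξ = b₁ * k 2 + b₂ * n 2) :
    px (px v) ξ * py (py v) ξ - (py (px v) ξ) ^ 2 = (a₁ * b₂ - a₂ * b₁) * t 2 := by
  have hsq : (py (px v) ξ) ^ 2 = (a₁ * k 1 + a₂ * n 1) * (b₁ * k 0 + b₂ * n 0) := by
    rw [pow_two]
    nth_rewrite 2 [symm_aux v hv ξ]
    rw [hx1, hy0]
  rw [hx0, hy1, hsq, hn0, hn1]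
  linear_combination (a₁ * b₂ - a₂ * b₁) * (t 2 * hk - k 2 * htk)
end

section
/- With notation as above (orthonormal t, k, n = t × k, μ := n₁²+n₂² ≠ 0, and X, Y solving the linear system), the determinant D_N := p·Y − X·q satisfies μ·D_N = β·(p·n₂ − q·n₁) − t₃·(p² + q²). -/
/-- For X, Y solving the linear system of the normal derivatives, the normal
stability determinant D_N := p·Y − X·q satisfies
μ·D_N = β·(p·n₂ − q·n₁) − t₃·(p² + q²). -/
theorem normal_stability_determinant_formula (t k n : Fin 3 → ℝ)
    (ht : t 0 ^ 2 + t 1 ^ 2 + t 2 ^ 2 = 1)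
    (hk : k 0 ^ 2 + k 1 ^ 2 + k 2 ^ 2 = 1)
    (htk : t 0 * k 0 + t 1 * k 1 + t 2 * k 2 = 0)
    (hn0 : n 0 = t 1 * k 2 - t 2 * k 1)
    (hn1 : n 1 = t 2 * k 0 - t 0 * k 2)
    (hn2 : n 2 = t 0 * k 1 - t 1 * k 0)
    (hμ : n 0 ^ 2 + n 1 ^ 2 ≠ 0)
    (β p q X Y : ℝ)
    (heq1 : p * k 0 + X * n 0 + q * k 1 + Y * n 1 = β)
    (heq2 : p * k 1 + X * n 1 = q * k 0 + Y * n 0) :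
    (n 0 ^ 2 + n 1 ^ 2) * (p * Y - X * q) =
      β * (p * n 1 - q * n 0) - t 2 * (p ^ 2 + q ^ 2) := by
  linear_combination (p * n 1 - q * n 0) * heq1 - (p * n 0 + q * n 1) * heq2
    + (p^2 + q^2) * k 2 * htk - (p^2 + q^2) * t 2 * hk
    + (p^2 + q^2) * k 1 * hn0 - (p^2 + q^2) * k 0 * hn1
end
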